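/- arXiv:1007.3558 — 3 statements merged into one kernel-verified Lean document; each statement's English description precedes it below -/
import Mathlib

section
/- For every real number C > 0, if g ∈ A_C has vanishing constant coefficient (g(0) = 0), then for every natural number n ≥ 1 one has ‖g^n‖_C ≤ ‖g‖_C^n / n!; in particular ‖g^n‖_C^{1/n} → 0 as n → ∞, i.e. g is topologically nilpotent in the Banach algebra A_C. -/
open scoped ENNReal

/-- The norm `‖f‖_C = ∑_{j=0}^∞ |a_j| C^j / j!` of a formal power series
`f = ∑ a_j t^j ∈ ℂ[[t]]`, valued in `[0,∞]`. -/
noncomputable def normC (C : ℝ) (f : PowerSeries ℂ) : ℝ≥0∞ :=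
  ∑' j : ℕ, (‖(PowerSeries.coeff (R := ℂ) j) f‖₊ : ℝ≥0∞) * ENNReal.ofReal (C ^ j / (j.factorial : ℝ))

/-- `A_C = {f ∈ ℂ[[t]] : ‖f‖_C < ∞}`. -/
def Asub (C : ℝ) : Set (PowerSeries ℂ) := {f | normC C f < ⊤}


lemma coeff_pow_eq_zero_aux (g : PowerSeries ℂ)
    (h0 : PowerSeries.constantCoeff (R := ℂ) g = 0) :
    ∀ n l : ℕ, l < n → PowerSeries.coeff (R := ℂ) l (g ^ n) = 0 := by
  intro n
  induction n with
  | zero => intro l hl; omega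
  | succ n ih =>
    intro l hl
    rw [pow_succ', PowerSeries.coeff_mul]
    apply Finset.sum_eq_zero
    intro p hp
    rw [Finset.HasAntidiagonal.mem_antidiagonal] at hp
    rcases Nat.eq_zero_or_pos p.1 with h1 | h1
    · have : PowerSeries.coeff (R := ℂ) p.1 g = 0 := by
        rw [h1]; simpa [PowerSeries.coeff_zero_eq_constantCoeff] using h0
      rw [this, zero_mul]
    · have : p.2 < n := by omega
      rw [ih p.2 this, mul_zero]

lemma fact_ineq (n k l : ℕ) (hk : 1 ≤ k) (hl : n ≤ l) :
    (n + 1) * (k.factorial * l.factorial) ≤ (k + l).factorial := by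
  have h1 : n + 1 ≤ (k + l).choose l := by
    calc n + 1 ≤ l + 1 := by omega
    _ = (1 + l).choose l := by
        rw [Nat.add_comm 1 l, Nat.choose_succ_self_right]
    _ ≤ (k + l).choose l := Nat.choose_le_choose l (by omega)
  calc (n + 1) * (k.factorial * l.factorial)
      ≤ (k + l).choose l * (k.factorial * l.factorial) :=
        Nat.mul_le_mul_right _ h1
    _ = (k + l).factorial := by
        rw [← mul_assoc]; exact Nat.add_choose_mul_factorial_mul_factorial k l

lemma key (C : ℝ) (hC : 0 < C) (g : PowerSeries ℂ)
    (h0 : PowerSeries.constantCoeff (R := ℂ) g = 0) (n : ℕ) :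
    ∑' j : ℕ, (‖(PowerSeries.coeff (R := ℂ) j) (g ^ n)‖₊ : ℝ≥0∞) *
      ENNReal.ofReal (C ^ j * (n.factorial : ℝ) / (j.factorial : ℝ)) ≤ normC C g ^ n := by
  induction n with
  | zero =>
    rw [pow_zero, pow_zero]
    rw [tsum_eq_single 0 (by
      intro j hj
      simp [PowerSeries.coeff_one, hj])]
    simp
  | succ n ih =>
    set F : ℕ → ℝ≥0∞ := fun k =>
      (‖(PowerSeries.coeff (R := ℂ) k) g‖₊ : ℝ≥0∞) * ENNReal.ofReal (C ^ k / (k.factorial : ℝ)) with hF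
    set G : ℕ → ℝ≥0∞ := fun l =>
      (‖(PowerSeries.coeff (R := ℂ) l) (g ^ n)‖₊ : ℝ≥0∞) *
        ENNReal.ofReal (C ^ l * (n.factorial : ℝ) / (l.factorial : ℝ)) with hG
    have step1 : ∀ j : ℕ,
        (‖(PowerSeries.coeff (R := ℂ) j) (g ^ (n + 1))‖₊ : ℝ≥0∞) *
          ENNReal.ofReal (C ^ j * ((n + 1).factorial : ℝ) / (j.factorial : ℝ)) ≤
        ∑ p ∈ Finset.HasAntidiagonal.antidiagonal j, F p.1 * G p.2 := by
      intro j
      have hc : (‖(PowerSeries.coeff (R := ℂ) j) (g ^ (n + 1))‖₊ : ℝ≥0∞) ≤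
          ∑ p ∈ Finset.HasAntidiagonal.antidiagonal j,
            (‖(PowerSeries.coeff (R := ℂ) p.1) g‖₊ : ℝ≥0∞) *
              (‖(PowerSeries.coeff (R := ℂ) p.2) (g ^ n)‖₊ : ℝ≥0∞) := by
        rw [pow_succ', PowerSeries.coeff_mul]
        refine le_trans (ENNReal.coe_le_coe.2 (nnnorm_sum_le _ _)) ?_
        rw [ENNReal.coe_finset_sum]
        refine Finset.sum_le_sum fun p _ => ?_
        rw [← ENNReal.coe_mul, nnnorm_mul]
      calc (‖(PowerSeries.coeff (R := ℂ) j) (g ^ (n + 1))‖₊ : ℝ≥0∞) *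
            ENNReal.ofReal (C ^ j * ((n + 1).factorial : ℝ) / (j.factorial : ℝ))
          ≤ (∑ p ∈ Finset.HasAntidiagonal.antidiagonal j,
              (‖(PowerSeries.coeff (R := ℂ) p.1) g‖₊ : ℝ≥0∞) *
                (‖(PowerSeries.coeff (R := ℂ) p.2) (g ^ n)‖₊ : ℝ≥0∞)) *
            ENNReal.ofReal (C ^ j * ((n + 1).factorial : ℝ) / (j.factorial : ℝ)) :=
            mul_le_mul_left hc _
        _ = ∑ p ∈ Finset.HasAntidiagonal.antidiagonal j,
              ((‖(PowerSeries.coeff (R := ℂ) p.1) g‖₊ : ℝ≥0∞) *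
                (‖(PowerSeries.coeff (R := ℂ) p.2) (g ^ n)‖₊ : ℝ≥0∞)) *
              ENNReal.ofReal (C ^ j * ((n + 1).factorial : ℝ) / (j.factorial : ℝ)) :=
            Finset.sum_mul _ _ _
        _ ≤ ∑ p ∈ Finset.HasAntidiagonal.antidiagonal j, F p.1 * G p.2 := by
            refine Finset.sum_le_sum fun p hp => ?_
            rw [Finset.HasAntidiagonal.mem_antidiagonal] at hp
            rcases Nat.eq_zero_or_pos p.1 with h1 | h1
            · have : PowerSeries.coeff (R := ℂ) p.1 g = 0 := by
                rw [h1]; simpa [PowerSeries.coeff_zero_eq_constantCoeff] using h0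
              simp [this]
            rcases lt_or_ge p.2 n with h2 | h2
            · have : PowerSeries.coeff (R := ℂ) p.2 (g ^ n) = 0 :=
                coeff_pow_eq_zero_aux g h0 n p.2 h2
              simp [this]
            -- main case
            have hw : ENNReal.ofReal (C ^ j * ((n + 1).factorial : ℝ) / (j.factorial : ℝ)) ≤
                ENNReal.ofReal (C ^ p.1 / (p.1.factorial : ℝ)) *
                ENNReal.ofReal (C ^ p.2 * (n.factorial : ℝ) / (p.2.factorial : ℝ)) := by
              rw [← ENNReal.ofReal_mul (by positivity)]
              refine ENNReal.ofReal_le_ofReal ?_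
              have hnat : ((n + 1) * (p.1.factorial * p.2.factorial) : ℝ) ≤
                  ((p.1 + p.2).factorial : ℝ) := by exact_mod_cast fact_ineq n p.1 p.2 h1 h2
              rw [← hp, pow_add, div_mul_div_comm]
              rw [div_le_div_iff₀ (by positivity) (by positivity)]
              have hfs : ((n + 1).factorial : ℝ) = (n + 1) * (n.factorial : ℝ) := by
                push_cast [Nat.factorial_succ]; ring
              rw [hfs]
              have hCp : (0 : ℝ) < C ^ p.1 * C ^ p.2 := by positivity
              have hfn : (0 : ℝ) < (n.factorial : ℝ) := by positivity
              nlinarith [mul_le_mul_of_nonneg_left hnat (le_of_lt (mul_pos hCp hfn))]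
            calc ((‖(PowerSeries.coeff (R := ℂ) p.1) g‖₊ : ℝ≥0∞) *
                    (‖(PowerSeries.coeff (R := ℂ) p.2) (g ^ n)‖₊ : ℝ≥0∞)) *
                  ENNReal.ofReal (C ^ j * ((n + 1).factorial : ℝ) / (j.factorial : ℝ))
                ≤ ((‖(PowerSeries.coeff (R := ℂ) p.1) g‖₊ : ℝ≥0∞) *
                    (‖(PowerSeries.coeff (R := ℂ) p.2) (g ^ n)‖₊ : ℝ≥0∞)) *
                  (ENNReal.ofReal (C ^ p.1 / (p.1.factorial : ℝ)) *
                    ENNReal.ofReal (C ^ p.2 * (n.factorial : ℝ) / (p.2.factorial : ℝ))) :=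
                  mul_le_mul_right hw _
              _ = F p.1 * G p.2 := by rw [hF, hG]; ring
    calc ∑' j : ℕ, (‖(PowerSeries.coeff (R := ℂ) j) (g ^ (n + 1))‖₊ : ℝ≥0∞) *
          ENNReal.ofReal (C ^ j * ((n + 1).factorial : ℝ) / (j.factorial : ℝ))
        ≤ ∑' j : ℕ, ∑ p ∈ Finset.HasAntidiagonal.antidiagonal j, F p.1 * G p.2 :=
          ENNReal.tsum_le_tsum step1
      _ = ∑' j : ℕ, ∑' p : (Finset.HasAntidiagonal.antidiagonal j : Finset (ℕ × ℕ)),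
            F (p : ℕ × ℕ).1 * G (p : ℕ × ℕ).2 :=
          tsum_congr fun j => (Finset.tsum_subtype _ _).symm
      _ = ∑' x : Σ j : ℕ, (Finset.HasAntidiagonal.antidiagonal j : Finset (ℕ × ℕ)),
            F (x.2 : ℕ × ℕ).1 * G (x.2 : ℕ × ℕ).2 :=
          (ENNReal.tsum_sigma'
            (fun x : Σ j : ℕ, (Finset.HasAntidiagonal.antidiagonal j : Finset (ℕ × ℕ)) =>
              F (x.2 : ℕ × ℕ).1 * G (x.2 : ℕ × ℕ).2)).symm
      _ = ∑' p : ℕ × ℕ, F p.1 * G p.2 := by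
          have := Finset.HasAntidiagonal.sigmaAntidiagonalEquivProd.tsum_eq
            (fun p : ℕ × ℕ => F p.1 * G p.2)
          simpa [Finset.HasAntidiagonal.sigmaAntidiagonalEquivProd] using this
      _ = (∑' k : ℕ, F k) * ∑' l : ℕ, G l := by
          rw [ENNReal.tsum_prod (f := fun k l => F k * G l)]
          simp_rw [ENNReal.tsum_mul_left, ENNReal.tsum_mul_right]
      _ ≤ normC C g * normC C g ^ n := by
          refine mul_le_mul' (le_of_eq rfl) ih
      _ = normC C g ^ (n + 1) := (pow_succ' _ _).symm


/-- If `g ∈ A_C` has vanishing constant coefficient then `‖gⁿ‖_C ≤ ‖g‖_Cⁿ/n!`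
for all `n ≥ 1`; in particular `‖gⁿ‖_C^{1/n} → 0`, i.e. `g` is topologically
nilpotent in the Banach algebra `A_C`. -/
theorem statement_5 (C : ℝ) (hC : 0 < C) (g : PowerSeries ℂ) (hg : g ∈ Asub C)
    (h0 : PowerSeries.constantCoeff (R := ℂ) g = 0) :
    (∀ n : ℕ, 1 ≤ n → normC C (g ^ n) ≤ normC C g ^ n / (n.factorial : ℝ≥0∞)) ∧
    Filter.Tendsto (fun n : ℕ => normC C (g ^ n) ^ (1 / (n : ℝ)))
      Filter.atTop (nhds 0) := by
  have hbound : ∀ n : ℕ, normC C (g ^ n) ≤ normC C g ^ n / (n.factorial : ℝ≥0∞) := by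
    intro n
    have hmul : normC C (g ^ n) * (n.factorial : ℝ≥0∞) ≤ normC C g ^ n := by
      rw [normC, ← ENNReal.tsum_mul_right]
      refine le_trans (le_of_eq (tsum_congr fun j => ?_)) (key C hC g h0 n)
      rw [mul_assoc]
      congr 1
      rw [← ENNReal.ofReal_natCast, ← ENNReal.ofReal_mul (by positivity)]
      congr 1
      ring
    rw [ENNReal.le_div_iff_mul_le (Or.inl (by exact_mod_cast n.factorial_pos.ne'))
      (Or.inl (by simp))]
    exact hmul
  refine ⟨fun n _ => hbound n, ?_⟩
  rw [ENNReal.tendsto_nhds_zero]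
  intro ε hε
  rcases eq_or_ne ε ⊤ with rfl | hεt
  · exact Filter.Eventually.of_forall fun n => le_top
  have hN : normC C g ≠ ⊤ := hg.ne
  set N := normC C g with hNdef
  set M : ℝ := (N / ε).toReal + 1 with hM
  have hM0 : 0 < M := by positivity
  have hNle : N ≤ ε * ENNReal.ofReal M := by
    have hfin : N / ε ≠ ⊤ := (ENNReal.div_lt_top hN hε.ne').ne
    have h1 : N / ε ≤ ENNReal.ofReal M := by
      rw [hM]
      calc N / ε = ENNReal.ofReal ((N / ε).toReal) := (ENNReal.ofReal_toReal hfin).symm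
        _ ≤ ENNReal.ofReal ((N / ε).toReal + 1) := ENNReal.ofReal_le_ofReal (by linarith)
    calc N = ε * (N / ε) := (ENNReal.mul_div_cancel hε.ne' hεt).symm
      _ ≤ ε * ENNReal.ofReal M := mul_le_mul_right h1 _
  have hdivε : N / ENNReal.ofReal M ≤ ε := by
    rw [ENNReal.div_le_iff_le_mul (Or.inl (ENNReal.ofReal_pos.2 hM0).ne')
      (Or.inl ENNReal.ofReal_ne_top)]
    exact hNle
  have hev : ∀ᶠ n : ℕ in Filter.atTop, M ^ n ≤ (n.factorial : ℝ) := by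
    have := FloorSemiring.tendsto_pow_div_factorial_atTop (K := ℝ) M
    have h2 := this.eventually (eventually_le_nhds (show (0:ℝ) < 1 by norm_num))
    filter_upwards [h2] with n hn
    have hfp : (0 : ℝ) < (n.factorial : ℝ) := by positivity
    rw [div_le_iff₀ hfp] at hn
    linarith
  filter_upwards [hev, Filter.eventually_ge_atTop 1] with n hn hn1
  have hMn : (ENNReal.ofReal M) ^ n ≤ (n.factorial : ℝ≥0∞) := by
    rw [← ENNReal.ofReal_pow hM0.le, ← ENNReal.ofReal_natCast]
    exact ENNReal.ofReal_le_ofReal hn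
  have h3 : normC C (g ^ n) ≤ (N / ENNReal.ofReal M) ^ n := by
    refine (hbound n).trans ?_
    have hdp : (N / ENNReal.ofReal M) ^ n = N ^ n / (ENNReal.ofReal M) ^ n := by
      rw [div_eq_mul_inv, mul_pow, ← ENNReal.inv_pow, ← div_eq_mul_inv]
    rw [hdp]
    exact ENNReal.div_le_div_left hMn _
  have hne : (n : ℝ) ≠ 0 := by exact_mod_cast (by omega : n ≠ 0)
  calc normC C (g ^ n) ^ (1 / (n : ℝ))
      ≤ ((N / ENNReal.ofReal M) ^ n) ^ (1 / (n : ℝ)) :=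
        ENNReal.rpow_le_rpow h3 (by positivity)
    _ = N / ENNReal.ofReal M := by
        rw [← ENNReal.rpow_natCast (N / ENNReal.ofReal M) n, ← ENNReal.rpow_mul,
          mul_one_div, div_self hne, ENNReal.rpow_one]
    _ ≤ ε := hdivε
end

section
/- For every real number C > 0 and every g ∈ A_C with vanishing constant coefficient, the series ∑_{n=0}^∞ (−g)^n converges in (A_C, ‖·‖_C) and its sum is a two-sided inverse of 1 + g in A_C; in particular 1 + g is a unit of the ring A_C. -/
open scoped ENNReal

namespace AuxS6

noncomputable def w (C : ℝ) (j : ℕ) : ℝ≥0∞ := ENNReal.ofReal (C ^ j / (j.factorial : ℝ))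

lemma normC_eq (C : ℝ) (f : PowerSeries ℂ) :
    normC C f = ∑' j : ℕ, (‖(PowerSeries.coeff (R := ℂ) j) f‖₊ : ℝ≥0∞) * w C j := rfl

lemma key_w (C : ℝ) (hC : 0 < C) (i j k : ℕ) (hk : k + 1 ≤ Nat.choose (i + j) j) :
    (k + 1 : ℝ≥0∞) * w C (i + j) ≤ w C i * w C j := by
  have h1 : (k + 1 : ℝ≥0∞) = ENNReal.ofReal (k + 1 : ℝ) := by
    rw [ENNReal.ofReal_add (by positivity) zero_le_one]
    simp [ENNReal.ofReal_natCast]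
  rw [h1, w, w, w, ← ENNReal.ofReal_mul (by positivity), ← ENNReal.ofReal_mul (by positivity)]
  apply ENNReal.ofReal_le_ofReal
  have h3 : ((k:ℝ) + 1) ≤ (Nat.choose (i+j) j : ℝ) := by exact_mod_cast hk
  have h2 : ((i+j).factorial : ℝ) = (Nat.choose (i+j) j : ℝ) * (j.factorial : ℝ) * (i.factorial : ℝ) := by
    have := Nat.choose_mul_factorial_mul_factorial (Nat.le_add_left j i)
    rw [← this]; push_cast [Nat.add_sub_cancel]; ring
  have key : ((k:ℝ)+1) * ((i.factorial : ℝ) * (j.factorial : ℝ)) ≤ ((i+j).factorial : ℝ) :=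
    calc ((k:ℝ)+1) * ((i.factorial : ℝ) * (j.factorial : ℝ))
        ≤ (Nat.choose (i+j) j : ℝ) * ((i.factorial : ℝ) * (j.factorial : ℝ)) :=
          mul_le_mul_of_nonneg_right h3 (by positivity)
      _ = _ := by rw [h2]; ring
  rw [div_mul_div_comm, ← pow_add, mul_div_assoc',
    div_le_div_iff₀ (by positivity) (by positivity)]
  nlinarith [pow_pos hC (i+j), key,
    mul_le_mul_of_nonneg_left key (le_of_lt (pow_pos hC (i+j)))]

/-- submultiplicativity with a factorial-type gain. -/
lemma normC_mul_le (C : ℝ) (hC : 0 < C) (g f : PowerSeries ℂ) (k : ℕ)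
    (hg : k = 0 ∨ PowerSeries.constantCoeff (R := ℂ) g = 0)
    (hf : ∀ j, j < k → PowerSeries.coeff (R := ℂ) j f = 0) :
    (k + 1 : ℝ≥0∞) * normC C (g * f) ≤ normC C g * normC C f := by
  classical
  set A : ℕ → ℝ≥0∞ := fun i => (‖(PowerSeries.coeff (R := ℂ) i) g‖₊ : ℝ≥0∞) * w C i with hA
  set B : ℕ → ℝ≥0∞ := fun j => (‖(PowerSeries.coeff (R := ℂ) j) f‖₊ : ℝ≥0∞) * w C j with hB
  have step1 : (k + 1 : ℝ≥0∞) * normC C (g * f) ≤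
      ∑' m : ℕ, ∑ p ∈ Finset.HasAntidiagonal.antidiagonal m, A p.1 * B p.2 := by
    rw [normC_eq, ← ENNReal.tsum_mul_left]
    apply ENNReal.tsum_le_tsum
    intro m
    have hco : (‖(PowerSeries.coeff (R := ℂ) m) (g * f)‖₊ : ℝ≥0∞) ≤
        ∑ p ∈ Finset.HasAntidiagonal.antidiagonal m,
          (‖(PowerSeries.coeff (R := ℂ) p.1) g‖₊ : ℝ≥0∞) * (‖(PowerSeries.coeff (R := ℂ) p.2) f‖₊ : ℝ≥0∞) := by
      rw [PowerSeries.coeff_mul]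
      refine le_trans (ENNReal.coe_le_coe.2 (nnnorm_sum_le _ _)) ?_
      rw [ENNReal.coe_finset_sum]
      apply Finset.sum_le_sum
      intro p _
      rw [← ENNReal.coe_mul]
      exact ENNReal.coe_le_coe.2 (nnnorm_mul_le _ _)
    calc (k + 1 : ℝ≥0∞) * ((‖(PowerSeries.coeff (R := ℂ) m) (g * f)‖₊ : ℝ≥0∞) * w C m)
        ≤ (k + 1 : ℝ≥0∞) * ((∑ p ∈ Finset.HasAntidiagonal.antidiagonal m,
            (‖(PowerSeries.coeff (R := ℂ) p.1) g‖₊ : ℝ≥0∞) * (‖(PowerSeries.coeff (R := ℂ) p.2) f‖₊ : ℝ≥0∞)) * w C m) := by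
          gcongr
      _ = ∑ p ∈ Finset.HasAntidiagonal.antidiagonal m,
            (‖(PowerSeries.coeff (R := ℂ) p.1) g‖₊ : ℝ≥0∞) * (‖(PowerSeries.coeff (R := ℂ) p.2) f‖₊ : ℝ≥0∞) *
              ((k + 1 : ℝ≥0∞) * w C m) := by
          rw [Finset.sum_mul, Finset.mul_sum]; congr 1; ext p; ring
      _ ≤ ∑ p ∈ Finset.HasAntidiagonal.antidiagonal m, A p.1 * B p.2 := by
          apply Finset.sum_le_sum
          intro p hp
          rcases eq_or_ne (PowerSeries.coeff (R := ℂ) p.1 g) 0 with h | h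
          · simp [hA, h]
          rcases eq_or_ne (PowerSeries.coeff (R := ℂ) p.2 f) 0 with h' | h'
          · simp [hB, h']
          have hm : p.1 + p.2 = m := Finset.HasAntidiagonal.mem_antidiagonal.mp hp
          have hchoose : k + 1 ≤ Nat.choose (p.1 + p.2) p.2 := by
            rcases hg with rfl | hg0
            · simpa using Nat.succ_le_of_lt (Nat.choose_pos (Nat.le_add_left _ _))
            · have hi : 1 ≤ p.1 := by
                rcases Nat.eq_zero_or_pos p.1 with h0 | h0
                · exfalso; apply h
                  rw [h0, PowerSeries.coeff_zero_eq_constantCoeff]; exact hg0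
                · exact h0
              have hj : k ≤ p.2 := by
                by_contra hjk
                exact h' (hf p.2 (lt_of_not_ge hjk))
              calc k + 1 ≤ p.2 + 1 := by omega
                _ = Nat.choose (p.2 + 1) p.2 := (Nat.choose_succ_self_right p.2).symm
                _ ≤ Nat.choose (p.1 + p.2) p.2 := Nat.choose_le_choose p.2 (by omega)
          have := key_w C hC p.1 p.2 k hchoose
          calc (‖(PowerSeries.coeff (R := ℂ) p.1) g‖₊ : ℝ≥0∞) * (‖(PowerSeries.coeff (R := ℂ) p.2) f‖₊ : ℝ≥0∞) *
                ((k + 1 : ℝ≥0∞) * w C m)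
              ≤ (‖(PowerSeries.coeff (R := ℂ) p.1) g‖₊ : ℝ≥0∞) * (‖(PowerSeries.coeff (R := ℂ) p.2) f‖₊ : ℝ≥0∞) *
                (w C p.1 * w C p.2) := by rw [← hm]; gcongr
            _ = A p.1 * B p.2 := by rw [hA, hB]; ring
  refine le_trans step1 ?_
  -- now show ∑' m, ∑ over antidiagonal ≤ (∑' A) * (∑' B)
  have step2 : (∑' m : ℕ, ∑ p ∈ Finset.HasAntidiagonal.antidiagonal m, A p.1 * B p.2) ≤
      ∑' p : ℕ × ℕ, A p.1 * B p.2 := by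
    have e1 : ∀ m : ℕ, ∑ p ∈ Finset.HasAntidiagonal.antidiagonal m, A p.1 * B p.2 =
        ∑' p : (Finset.HasAntidiagonal.antidiagonal m : Finset (ℕ × ℕ)), A (p : ℕ × ℕ).1 * B (p : ℕ × ℕ).2 :=
      fun m => (Finset.tsum_subtype _ _).symm
    simp_rw [e1]
    rw [← ENNReal.tsum_sigma' (fun x : Σ m : ℕ, (Finset.HasAntidiagonal.antidiagonal m : Finset (ℕ × ℕ)) =>
      A (x.2 : ℕ × ℕ).1 * B (x.2 : ℕ × ℕ).2)]
    apply ENNReal.tsum_comp_le_tsum_of_injective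
      (f := fun x : Σ m : ℕ, (Finset.HasAntidiagonal.antidiagonal m : Finset (ℕ × ℕ)) => (x.2 : ℕ × ℕ))
    rintro ⟨m, p, hp⟩ ⟨m', p', hp'⟩ hpp
    simp only at hpp
    have : m = m' := by
      rw [Finset.HasAntidiagonal.mem_antidiagonal] at hp hp'
      rw [← hp, ← hp', hpp]
    subst this
    simp [hpp]
  refine le_trans step2 (le_of_eq ?_)
  rw [ENNReal.tsum_prod', normC_eq, normC_eq]
  calc ∑' (i : ℕ) (j : ℕ), A i * B j = ∑' i : ℕ, A i * ∑' j : ℕ, B j := by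
        congr 1; ext i; exact ENNReal.tsum_mul_left
    _ = (∑' i : ℕ, A i) * ∑' j : ℕ, B j := ENNReal.tsum_mul_right
    _ = (∑' j : ℕ, (‖(PowerSeries.coeff (R := ℂ) j) g‖₊ : ℝ≥0∞) * w C j) *
        ∑' j : ℕ, (‖(PowerSeries.coeff (R := ℂ) j) f‖₊ : ℝ≥0∞) * w C j := rfl

lemma normC_one (C : ℝ) : normC C 1 = 1 := by
  rw [normC]
  rw [tsum_eq_single 0]
  · simp [ENNReal.ofReal_one]
  · intro j hj
    simp [PowerSeries.coeff_one, hj]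

lemma coeff_pow_eq_zero {g : PowerSeries ℂ} (h0 : PowerSeries.constantCoeff (R := ℂ) g = 0)
    {n j : ℕ} (hj : j < n) : PowerSeries.coeff (R := ℂ) j (g ^ n) = 0 := by
  have : (PowerSeries.X : PowerSeries ℂ) ^ n ∣ g ^ n :=
    pow_dvd_pow_of_dvd (PowerSeries.X_dvd_iff.mpr h0) n
  exact PowerSeries.X_pow_dvd_iff.mp this j hj

lemma normC_pow_le (C : ℝ) (hC : 0 < C) (g : PowerSeries ℂ)
    (h0 : PowerSeries.constantCoeff (R := ℂ) g = 0) (n : ℕ) :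
    (n.factorial : ℝ≥0∞) * normC C (g ^ n) ≤ (normC C g) ^ n := by
  induction n with
  | zero => simp [normC_one]
  | succ n ih =>
    have hmul : ((n : ℝ≥0∞) + 1) * normC C (g * g ^ n) ≤ normC C g * normC C (g ^ n) := by
      have := normC_mul_le C hC g (g ^ n) n (Or.inr h0)
        (fun j hj => coeff_pow_eq_zero h0 hj)
      simpa using this
    calc ((n+1).factorial : ℝ≥0∞) * normC C (g ^ (n+1))
        = (n.factorial : ℝ≥0∞) * (((n : ℝ≥0∞) + 1) * normC C (g * g ^ n)) := by
          rw [Nat.factorial_succ, pow_succ']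
          push_cast
          ring
      _ ≤ (n.factorial : ℝ≥0∞) * (normC C g * normC C (g ^ n)) := by gcongr
      _ = normC C g * ((n.factorial : ℝ≥0∞) * normC C (g ^ n)) := by ring
      _ ≤ normC C g * (normC C g) ^ n := by gcongr
      _ = (normC C g) ^ (n+1) := by rw [pow_succ']

lemma normC_mul_le' (C : ℝ) (hC : 0 < C) (g f : PowerSeries ℂ) :
    normC C (g * f) ≤ normC C g * normC C f := by
  have := normC_mul_le C hC g f 0 (Or.inl rfl) (by omega)
  simpa using this

lemma normC_neg (C : ℝ) (f : PowerSeries ℂ) : normC C (-f) = normC C f := by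
  rw [normC, normC]
  congr 1; ext j; rw [map_neg, nnnorm_neg]

lemma normC_neg_pow (C : ℝ) (g : PowerSeries ℂ) (n : ℕ) :
    normC C ((-g) ^ n) = normC C (g ^ n) := by
  rcases Nat.even_or_odd n with he | ho
  · rw [he.neg_pow]
  · rw [ho.neg_pow, normC_neg]

end AuxS6

open AuxS6 in
/-- If `g ∈ A_C` has vanishing constant coefficient then the geometric series
`∑ₙ (−g)ⁿ` converges in `(A_C, ‖·‖_C)` and its sum is a two-sided inverse of
`1 + g`; in particular `1 + g` is a unit of the ring `A_C`. -/
theorem statement_6 (C : ℝ) (hC : 0 < C) (g : PowerSeries ℂ) (hg : g ∈ Asub C)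
    (h0 : PowerSeries.constantCoeff (R := ℂ) g = 0) :
    ∃ h ∈ Asub C,
      Filter.Tendsto
        (fun N : ℕ => normC C ((∑ n ∈ Finset.range N, (-g) ^ n) - h))
        Filter.atTop (nhds 0) ∧
      (1 + g) * h = 1 ∧ h * (1 + g) = 1 := by
  have hu : PowerSeries.constantCoeff (R := ℂ) (1 + g) = ((1 : ℂˣ) : ℂ) := by simp [h0]
  set h := PowerSeries.invOfUnit (1 + g) 1 with hh
  have hmul : (1 + g) * h = 1 := PowerSeries.mul_invOfUnit (1 + g) 1 hu
  have hmul' : h * (1 + g) = 1 := by rw [mul_comm]; exact hmul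
  have hid : ∀ N : ℕ, (∑ n ∈ Finset.range N, (-g) ^ n) - h = -((-g) ^ N * h) := by
    intro N
    have e2 := geom_sum_mul (-g) N
    linear_combination (-(∑ n ∈ Finset.range N, (-g) ^ n)) * hmul + (-h) * e2
  -- coefficients of h
  have hcoeff : ∀ j : ℕ, PowerSeries.coeff (R := ℂ) j h =
      PowerSeries.coeff (R := ℂ) j (∑ n ∈ Finset.range (j + 1), (-g) ^ n) := by
    intro j
    have hz : PowerSeries.coeff (R := ℂ) j ((-g) ^ (j + 1) * h) = 0 := by
      have hdvd : (PowerSeries.X : PowerSeries ℂ) ^ (j + 1) ∣ (-g) ^ (j + 1) * h :=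
        Dvd.dvd.mul_right (pow_dvd_pow_of_dvd (PowerSeries.X_dvd_iff.mpr (by simp [h0])) _) h
      exact PowerSeries.X_pow_dvd_iff.mp hdvd j (lt_add_one j)
    have e := congrArg (PowerSeries.coeff (R := ℂ) j) (hid (j + 1))
    rw [map_sub, map_neg, hz, neg_zero, sub_eq_zero] at e
    exact e.symm
  have hnb : ∀ j : ℕ, (‖PowerSeries.coeff (R := ℂ) j h‖₊ : ℝ≥0∞) ≤
      ∑ n ∈ Finset.range (j + 1), (‖PowerSeries.coeff (R := ℂ) j (g ^ n)‖₊ : ℝ≥0∞) := by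
    intro j
    rw [hcoeff j, map_sum]
    refine le_trans (ENNReal.coe_le_coe.2 (nnnorm_sum_le _ _)) ?_
    rw [ENNReal.coe_finset_sum]
    apply Finset.sum_le_sum
    intro n _
    apply ENNReal.coe_le_coe.2
    apply le_of_eq
    rcases Nat.even_or_odd n with he | ho
    · rw [he.neg_pow]
    · rw [ho.neg_pow, map_neg, nnnorm_neg]
  have hnormh : normC C h ≤ ∑' n : ℕ, normC C (g ^ n) := by
    rw [normC_eq]
    calc ∑' j : ℕ, (‖PowerSeries.coeff (R := ℂ) j h‖₊ : ℝ≥0∞) * w C j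
        ≤ ∑' j : ℕ, (∑ n ∈ Finset.range (j + 1),
            (‖PowerSeries.coeff (R := ℂ) j (g ^ n)‖₊ : ℝ≥0∞)) * w C j := by
          apply ENNReal.tsum_le_tsum
          intro j
          exact mul_le_mul_left (hnb j) _
      _ ≤ ∑' j : ℕ, ∑' n : ℕ, (‖PowerSeries.coeff (R := ℂ) j (g ^ n)‖₊ : ℝ≥0∞) * w C j := by
          apply ENNReal.tsum_le_tsum
          intro j
          rw [Finset.sum_mul]
          exact ENNReal.sum_le_tsum _
      _ = ∑' n : ℕ, ∑' j : ℕ, (‖PowerSeries.coeff (R := ℂ) j (g ^ n)‖₊ : ℝ≥0∞) * w C j :=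
          ENNReal.tsum_comm
      _ = ∑' n : ℕ, normC C (g ^ n) := by
          congr 1
  set K := (normC C g).toReal with hK
  have hgfin : normC C g ≠ ⊤ := hg.ne
  have hK0 : 0 ≤ K := ENNReal.toReal_nonneg
  have hofK : normC C g = ENNReal.ofReal K := (ENNReal.ofReal_toReal hgfin).symm
  have hpow : ∀ n : ℕ, normC C (g ^ n) ≤ ENNReal.ofReal (K ^ n / n.factorial) := by
    intro n
    have h1 := normC_pow_le C hC g h0 n
    have h2 : normC C (g ^ n) ≤ (normC C g) ^ n / (n.factorial : ℝ≥0∞) := by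
      rw [ENNReal.le_div_iff_mul_le
        (Or.inl (by exact_mod_cast (Nat.factorial_pos n).ne'))
        (Or.inl (ENNReal.natCast_ne_top _))]
      rw [mul_comm]; exact h1
    refine h2.trans (le_of_eq ?_)
    rw [ENNReal.ofReal_div_of_pos (by positivity), ENNReal.ofReal_pow hK0,
      ENNReal.ofReal_natCast, hofK]
  have hsumfin : ∑' n : ℕ, ENNReal.ofReal (K ^ n / n.factorial) ≠ ⊤ := by
    rw [← ENNReal.ofReal_tsum_of_nonneg (fun n => by positivity)
      (Real.summable_pow_div_factorial K)]
    exact ENNReal.ofReal_ne_top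
  have hmem : h ∈ Asub C :=
    lt_of_le_of_lt (hnormh.trans (ENNReal.tsum_le_tsum hpow)) (lt_top_iff_ne_top.2 hsumfin)
  refine ⟨h, hmem, ?_, hmul, hmul'⟩
  have hHfin : normC C h ≠ ⊤ := hmem.ne
  have hub : ∀ N : ℕ, normC C ((∑ n ∈ Finset.range N, (-g) ^ n) - h) ≤
      ENNReal.ofReal (K ^ N / N.factorial) * normC C h := by
    intro N
    rw [hid N, normC_neg]
    calc normC C ((-g) ^ N * h) ≤ normC C ((-g) ^ N) * normC C h := normC_mul_le' C hC _ _
      _ = normC C (g ^ N) * normC C h := by rw [normC_neg_pow]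
      _ ≤ ENNReal.ofReal (K ^ N / N.factorial) * normC C h :=
          mul_le_mul_left (hpow N) _
  have htend0 : Filter.Tendsto (fun N : ℕ => ENNReal.ofReal (K ^ N / N.factorial) * normC C h)
      Filter.atTop (nhds 0) := by
    have h1 : Filter.Tendsto (fun N : ℕ => (K ^ N / N.factorial : ℝ)) Filter.atTop (nhds 0) :=
      (Real.summable_pow_div_factorial K).tendsto_atTop_zero
    have h2 : Filter.Tendsto (fun N : ℕ => ENNReal.ofReal (K ^ N / N.factorial))
        Filter.atTop (nhds 0) := by
      have := ENNReal.tendsto_ofReal h1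
      simpa using this
    have h3 := ENNReal.Tendsto.mul_const h2 (Or.inr hHfin)
    simpa using h3
  exact tendsto_of_tendsto_of_tendsto_of_le_of_le tendsto_const_nhds htend0
    (fun N => zero_le) hub
end

section
/- For every real number C > 0, an element f ∈ A_C is a unit of the ring A_C if and only if its constant coefficient f(0) is nonzero; consequently A_C is a local ring whose maximal ideal is {f ∈ A_C : f(0) = 0}, and the map f ↦ f(0) induces a ring isomorphism from the residue field of A_C onto ℂ. -/
open scoped ENNReal

open scoped NNReal

noncomputable def ww (C : ℝ) (m : ℕ) : ℝ≥0∞ := ENNReal.ofReal (C ^ m / (m.factorial : ℝ))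

lemma normC_eq (C : ℝ) (f : PowerSeries ℂ) :
    normC C f = ∑' j : ℕ, (‖(PowerSeries.coeff (R := ℂ) j) f‖₊ : ℝ≥0∞) * ww C j := rfl

lemma ww_mul {C : ℝ} (hC : 0 ≤ C) (j k : ℕ) :
    ww C j * ww C k = (((j + k).choose j : ℕ) : ℝ≥0∞) * ww C (j + k) := by
  unfold ww
  rw [← ENNReal.ofReal_mul (by positivity), ← ENNReal.ofReal_natCast,
    ← ENNReal.ofReal_mul (by positivity)]
  congr 1
  have key : (((j+k).choose j : ℕ) : ℝ) * (j.factorial : ℝ) * (k.factorial : ℝ)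
      = ((j+k).factorial : ℝ) := by
    have := congrArg (Nat.cast (R := ℝ))
      (Nat.choose_mul_factorial_mul_factorial (Nat.le_add_right j k))
    simpa using this
  have h1 : (j.factorial : ℝ) ≠ 0 := by positivity
  have h2 : (k.factorial : ℝ) ≠ 0 := by positivity
  have h3 : ((j+k).factorial : ℝ) ≠ 0 := by positivity
  field_simp

  linear_combination (-(C ^ j * C ^ k)) * key

lemma choose_lb {n j k : ℕ} (hj : n ≤ j) (hk : 1 ≤ k) : n + 1 ≤ (j + k).choose j :=
  le_trans (by omega : n + 1 ≤ j + 1)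
    (le_trans (Nat.choose_succ_self_right j).ge (Nat.choose_le_choose j (by omega)))

lemma normC_mul_le {C : ℝ} (hC : 0 ≤ C) {n : ℕ} {f g : PowerSeries ℂ}
    (hf : ∀ m < n, PowerSeries.coeff (R := ℂ) m f = 0) (hg : PowerSeries.constantCoeff (R := ℂ) g = 0) :
    ((n : ℝ≥0∞) + 1) * normC C (f * g) ≤ normC C f * normC C g := by
  set a : ℕ → ℝ≥0∞ := fun j => (‖PowerSeries.coeff (R := ℂ) j f‖₊ : ℝ≥0∞) with ha
  set b : ℕ → ℝ≥0∞ := fun k => (‖PowerSeries.coeff (R := ℂ) k g‖₊ : ℝ≥0∞) with hb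
  set F : ℕ × ℕ → ℝ≥0∞ := fun p => (a p.1 * ww C p.1) * (b p.2 * ww C p.2) with hF
  have hRHS : normC C f * normC C g = ∑' m : ℕ, ∑ p ∈ Finset.HasAntidiagonal.antidiagonal m, F p := by
    have h1 : normC C f * normC C g = ∑' p : ℕ × ℕ, F p := by
      rw [ENNReal.tsum_prod', normC_eq, normC_eq, ← ENNReal.tsum_mul_right]
      exact tsum_congr fun j => ENNReal.tsum_mul_left.symm
    rw [h1, ← Finset.HasAntidiagonal.sigmaAntidiagonalEquivProd.tsum_eq F, ENNReal.tsum_sigma']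
    exact tsum_congr fun m => Finset.tsum_subtype (Finset.HasAntidiagonal.antidiagonal m) F
  rw [hRHS, normC_eq, ← ENNReal.tsum_mul_left]
  refine ENNReal.tsum_le_tsum fun m => ?_
  have hcoeff : (‖PowerSeries.coeff (R := ℂ) m (f * g)‖₊ : ℝ≥0∞)
      ≤ ∑ p ∈ Finset.HasAntidiagonal.antidiagonal m, a p.1 * b p.2 := by
    rw [PowerSeries.coeff_mul]
    calc (‖∑ p ∈ Finset.HasAntidiagonal.antidiagonal m,
          PowerSeries.coeff (R := ℂ) p.1 f * PowerSeries.coeff (R := ℂ) p.2 g‖₊ : ℝ≥0∞)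
        ≤ ∑ p ∈ Finset.HasAntidiagonal.antidiagonal m,
          (‖PowerSeries.coeff (R := ℂ) p.1 f * PowerSeries.coeff (R := ℂ) p.2 g‖₊ : ℝ≥0∞) := by
          exact_mod_cast nnnorm_sum_le _ _
      _ = ∑ p ∈ Finset.HasAntidiagonal.antidiagonal m, a p.1 * b p.2 := by
          refine Finset.sum_congr rfl fun p _ => ?_
          rw [nnnorm_mul]; push_cast; rfl
  calc ((n : ℝ≥0∞) + 1) * ((‖PowerSeries.coeff (R := ℂ) m (f * g)‖₊ : ℝ≥0∞) * ww C m)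
      ≤ ((n : ℝ≥0∞) + 1) * ((∑ p ∈ Finset.HasAntidiagonal.antidiagonal m, a p.1 * b p.2) * ww C m) := by
        exact mul_le_mul_right (mul_le_mul_left hcoeff _) _
    _ = ∑ p ∈ Finset.HasAntidiagonal.antidiagonal m, ((n : ℝ≥0∞) + 1) * (a p.1 * b p.2 * ww C m) := by
        rw [Finset.sum_mul, Finset.mul_sum]
    _ ≤ ∑ p ∈ Finset.HasAntidiagonal.antidiagonal m, F p := by
        refine Finset.sum_le_sum fun p hp => ?_
        have hpm : p.1 + p.2 = m := Finset.HasAntidiagonal.mem_antidiagonal.mp hp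
        rcases eq_or_ne (a p.1) 0 with h0 | h0
        · simp [h0]
        rcases eq_or_ne (b p.2) 0 with h1 | h1
        · simp [h1]
        have hj : n ≤ p.1 := by
          by_contra hlt
          exact h0 (by simp [ha, hf p.1 (by omega)])
        have hk : 1 ≤ p.2 := by
          by_contra h2
          have h2' : p.2 = 0 := by omega
          exact h1 (by simp [hb, h2', PowerSeries.coeff_zero_eq_constantCoeff, hg])
        have hw : ((n : ℝ≥0∞) + 1) * ww C m ≤ ww C p.1 * ww C p.2 := by
          have hc := choose_lb hj hk
          rw [ww_mul hC, hpm]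
          rw [hpm] at hc
          exact mul_le_mul_left (by exact_mod_cast hc) _
        calc ((n : ℝ≥0∞) + 1) * (a p.1 * b p.2 * ww C m)
            = (a p.1 * b p.2) * (((n : ℝ≥0∞) + 1) * ww C m) := by ring
          _ ≤ (a p.1 * b p.2) * (ww C p.1 * ww C p.2) := mul_le_mul_right hw _
          _ = F p := by rw [hF]; ring

lemma normC_one (C : ℝ) : normC C 1 = 1 := by
  rw [normC_eq]
  rw [tsum_eq_single 0 (fun j hj => by simp [PowerSeries.coeff_one, hj])]
  simp [ww]

lemma normC_C_mul (C : ℝ) (z : ℂ) (f : PowerSeries ℂ) :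
    normC C (PowerSeries.C (R := ℂ) z * f) = (‖z‖₊ : ℝ≥0∞) * normC C f := by
  rw [normC_eq, normC_eq, ← ENNReal.tsum_mul_left]
  refine tsum_congr fun j => ?_
  rw [PowerSeries.coeff_C_mul, nnnorm_mul]
  push_cast
  ring

lemma normC_add_le (C : ℝ) (f g : PowerSeries ℂ) :
    normC C (f + g) ≤ normC C f + normC C g := by
  rw [normC_eq, normC_eq, normC_eq, ← ENNReal.tsum_add]
  refine ENNReal.tsum_le_tsum fun j => ?_
  rw [← add_mul]
  refine mul_le_mul_left ?_ _
  rw [map_add]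
  exact_mod_cast nnnorm_add_le _ _

lemma normC_neg (C : ℝ) (f : PowerSeries ℂ) : normC C (-f) = normC C f := by
  rw [normC_eq, normC_eq]
  exact tsum_congr fun j => by rw [map_neg, nnnorm_neg]

lemma normC_pow_le {C : ℝ} (hC : 0 ≤ C) {g : PowerSeries ℂ}
    (hg : PowerSeries.constantCoeff (R := ℂ) g = 0) (n : ℕ) :
    ((n.factorial : ℕ) : ℝ≥0∞) * normC C (g ^ n) ≤ (normC C g) ^ n := by
  induction n with
  | zero => simp [normC_one]
  | succ n ih =>
    have hdvd : (PowerSeries.X : PowerSeries ℂ) ^ n ∣ g ^ n :=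
      pow_dvd_pow_of_dvd (PowerSeries.X_dvd_iff.mpr hg) n
    have hf : ∀ m < n, PowerSeries.coeff (R := ℂ) m (g ^ n) = 0 :=
      PowerSeries.X_pow_dvd_iff.mp hdvd
    have key := normC_mul_le hC hf hg
    calc (((n+1).factorial : ℕ) : ℝ≥0∞) * normC C (g ^ (n+1))
        = ((n.factorial : ℕ) : ℝ≥0∞) * (((n : ℝ≥0∞) + 1) * normC C (g ^ n * g)) := by
          rw [pow_succ]
          push_cast [Nat.factorial_succ]
          ring
      _ ≤ ((n.factorial : ℕ) : ℝ≥0∞) * (normC C (g ^ n) * normC C g) :=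
          mul_le_mul_right key _
      _ = (((n.factorial : ℕ) : ℝ≥0∞) * normC C (g ^ n)) * normC C g := by ring
      _ ≤ (normC C g) ^ n * normC C g := mul_le_mul_left ih _
      _ = (normC C g) ^ (n+1) := by rw [pow_succ]

lemma coeff_one_sub_inv {h : PowerSeries ℂ} (hh : PowerSeries.constantCoeff (R := ℂ) h = 0) (m : ℕ) :
    PowerSeries.coeff (R := ℂ) m (1 - h)⁻¹
      = ∑ n ∈ Finset.range (m+1), PowerSeries.coeff (R := ℂ) m (h ^ n) := by
  have hu : PowerSeries.constantCoeff (R := ℂ) (1 - h) ≠ 0 := by simp [hh]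
  set s : PowerSeries ℂ := ∑ n ∈ Finset.range (m+1), h ^ n with hs
  have hgeom : (1 - h) * s = 1 - h ^ (m+1) := by
    have := geom_sum_mul h (m+1)
    rw [hs]
    linear_combination -this
  have hinv : (1 - h)⁻¹ * (1 - h) = 1 := PowerSeries.inv_mul_cancel _ hu
  have hdecomp : (1 - h)⁻¹ = s + (1 - h)⁻¹ * h ^ (m+1) := by
    have h2 : (1 - h)⁻¹ * ((1 - h) * s) = s := by rw [← mul_assoc, hinv, one_mul]
    rw [hgeom] at h2
    linear_combination h2
  have hz : PowerSeries.coeff (R := ℂ) m ((1 - h)⁻¹ * h ^ (m+1)) = 0 := by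
    have hdvd : (PowerSeries.X : PowerSeries ℂ) ^ (m+1) ∣ (1 - h)⁻¹ * h ^ (m+1) :=
      Dvd.dvd.mul_left (pow_dvd_pow_of_dvd (PowerSeries.X_dvd_iff.mpr hh) (m+1)) _
    exact PowerSeries.X_pow_dvd_iff.mp hdvd m (by omega)
  rw [hdecomp, map_add, hz, add_zero, hs, map_sum]

lemma exists_inv {C : ℝ} (hC : 0 < C) {f : PowerSeries ℂ}
    (hf : normC C f < ⊤) (h0 : PowerSeries.constantCoeff (R := ℂ) f ≠ 0) :
    ∃ g : PowerSeries ℂ, normC C g < ⊤ ∧ f * g = 1 := by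
  set c := (PowerSeries.constantCoeff (R := ℂ) f)⁻¹ with hc
  set h : PowerSeries ℂ := 1 - PowerSeries.C (R := ℂ) c * f with hhdef
  have hh0 : PowerSeries.constantCoeff (R := ℂ) h = 0 := by
    simp [hhdef, hc, inv_mul_cancel₀ h0]
  have hhfin : normC C h < ⊤ := by
    have hle : normC C h ≤ normC C 1 + normC C (-(PowerSeries.C (R := ℂ) c * f)) := by
      rw [hhdef, sub_eq_add_neg]; exact normC_add_le C _ _
    rw [normC_neg, normC_C_mul, normC_one] at hle
    refine lt_of_le_of_lt hle ?_
    exact ENNReal.add_lt_top.mpr ⟨ENNReal.one_lt_top,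
      ENNReal.mul_lt_top ENNReal.coe_lt_top hf⟩
  set t : ℝ≥0 := (normC C h).toNNReal with ht
  have hht : normC C h = (t : ℝ≥0∞) := (ENNReal.coe_toNNReal hhfin.ne).symm
  have hden : ∀ n : ℕ, (n.factorial : ℝ≥0) ≠ 0 := fun n => by
    exact_mod_cast (Nat.factorial_pos n).ne'
  have hsum : (∑' n : ℕ, ((t ^ n / n.factorial : ℝ≥0) : ℝ≥0∞)) ≠ ⊤ := by
    rw [ENNReal.tsum_coe_ne_top_iff_summable, ← NNReal.summable_coe]
    have hco : ∀ n : ℕ, ((t ^ n / n.factorial : ℝ≥0) : ℝ) = (t : ℝ) ^ n / n.factorial := by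
      intro n; push_cast; ring
    simpa [hco] using Real.summable_pow_div_factorial (t : ℝ)
  have hbound : normC C (1 - h)⁻¹ ≤ ∑' n : ℕ, ((t ^ n / n.factorial : ℝ≥0) : ℝ≥0∞) := by
    have step1 : normC C (1 - h)⁻¹ ≤ ∑' m : ℕ, ∑' n : ℕ,
        (‖PowerSeries.coeff (R := ℂ) m (h ^ n)‖₊ : ℝ≥0∞) * ww C m := by
      rw [normC_eq]
      refine ENNReal.tsum_le_tsum fun m => ?_
      rw [coeff_one_sub_inv hh0 m]
      calc (‖∑ n ∈ Finset.range (m+1), PowerSeries.coeff (R := ℂ) m (h ^ n)‖₊ : ℝ≥0∞) * ww C m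
          ≤ (∑ n ∈ Finset.range (m+1), (‖PowerSeries.coeff (R := ℂ) m (h ^ n)‖₊ : ℝ≥0∞)) * ww C m :=
            mul_le_mul_left (by exact_mod_cast nnnorm_sum_le _ _) _
        _ = ∑ n ∈ Finset.range (m+1), (‖PowerSeries.coeff (R := ℂ) m (h ^ n)‖₊ : ℝ≥0∞) * ww C m := by
            rw [Finset.sum_mul]
        _ ≤ ∑' n : ℕ, (‖PowerSeries.coeff (R := ℂ) m (h ^ n)‖₊ : ℝ≥0∞) * ww C m :=
            ENNReal.sum_le_tsum _
    refine le_trans step1 ?_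
    rw [ENNReal.tsum_comm]
    refine ENNReal.tsum_le_tsum fun n => ?_
    have h1 : (∑' m : ℕ, (‖PowerSeries.coeff (R := ℂ) m (h ^ n)‖₊ : ℝ≥0∞) * ww C m)
        = normC C (h ^ n) := (normC_eq C _).symm
    rw [h1]
    have h2 := normC_pow_le hC.le hh0 n
    rw [hht] at h2
    have hrw : ((t ^ n / n.factorial : ℝ≥0) : ℝ≥0∞)
        = ((t : ℝ≥0∞) ^ n) / (((n.factorial : ℕ)) : ℝ≥0∞) := by
      rw [ENNReal.coe_div (hden n)]
      push_cast
      rfl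
    rw [hrw, ENNReal.le_div_iff_mul_le
      (Or.inl (by exact_mod_cast (Nat.factorial_pos n).ne'))
      (Or.inl (ENNReal.natCast_ne_top _))]
    rw [mul_comm]
    exact_mod_cast h2
  refine ⟨PowerSeries.C (R := ℂ) c * (1 - h)⁻¹, ?_, ?_⟩
  · rw [normC_C_mul]
    exact ENNReal.mul_lt_top ENNReal.coe_lt_top
      (lt_of_le_of_lt hbound (lt_top_iff_ne_top.mpr hsum))
  · have h1h : (1 : PowerSeries ℂ) - h = PowerSeries.C (R := ℂ) c * f := by
      rw [hhdef]; ring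
    calc f * (PowerSeries.C (R := ℂ) c * (1 - h)⁻¹) = (1 - h) * (1 - h)⁻¹ := by
          rw [h1h]; ring
      _ = 1 := PowerSeries.mul_inv_cancel _ (by simp [hh0])


/-- An element `f ∈ A_C` is a unit of the ring `A_C` iff its constant
coefficient is nonzero; consequently (for any realization of `A_C` as a
subring `S` of `ℂ[[t]]`) `A_C` is a local ring whose maximal ideal is
`{f ∈ A_C : f(0) = 0}`, and `f ↦ f(0)` induces a ring isomorphism of the
residue field of `A_C` with `ℂ`. -/
theorem statement_7 (C : ℝ) (hC : 0 < C)
    (S : Subring (PowerSeries ℂ)) (hS : (S : Set (PowerSeries ℂ)) = Asub C) :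
    (∀ f ∈ Asub C, (∃ g ∈ Asub C, f * g = 1 ∧ g * f = 1) ↔
      PowerSeries.constantCoeff (R := ℂ) f ≠ 0) ∧
    IsLocalRing S ∧
    (∀ h : IsLocalRing S,
      ((IsLocalRing.maximalIdeal S : Set S) =
        {f : S | PowerSeries.constantCoeff (R := ℂ) (f : PowerSeries ℂ) = 0}) ∧
      ∃ e : IsLocalRing.ResidueField S ≃+* ℂ,
        ∀ f : S, e (IsLocalRing.residue S f) =
          PowerSeries.constantCoeff (R := ℂ) (f : PowerSeries ℂ)) := by
  have hmemS : ∀ x : PowerSeries ℂ, x ∈ S ↔ normC C x < ⊤ := by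
    intro x
    constructor
    · intro hx
      have hx' : x ∈ (S : Set (PowerSeries ℂ)) := hx
      rw [hS] at hx'
      exact hx'
    · intro hx
      have hx' : x ∈ (S : Set (PowerSeries ℂ)) := by rw [hS]; exact hx
      exact hx'
  have key : ∀ f ∈ Asub C, (∃ g ∈ Asub C, f * g = 1 ∧ g * f = 1) ↔
      PowerSeries.constantCoeff (R := ℂ) f ≠ 0 := by
    intro f hf
    constructor
    · rintro ⟨g, hg, hfg, -⟩ h0
      have hcc := congrArg (PowerSeries.constantCoeff (R := ℂ)) hfg
      rw [map_mul, map_one, h0, zero_mul] at hcc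
      exact zero_ne_one hcc
    · intro h0
      obtain ⟨g, hgfin, hfg⟩ := exists_inv hC hf h0
      exact ⟨g, hgfin, hfg, by rw [mul_comm]; exact hfg⟩
  have hunit : ∀ a : S, IsUnit a ↔ PowerSeries.constantCoeff (R := ℂ) (a : PowerSeries ℂ) ≠ 0 := by
    intro a
    constructor
    · intro ha h0
      obtain ⟨b, hab⟩ := isUnit_iff_exists_inv.mp ha
      have hab' : (a : PowerSeries ℂ) * (b : PowerSeries ℂ) = 1 := by
        exact_mod_cast congrArg Subtype.val hab
      have h1 : PowerSeries.constantCoeff (R := ℂ) ((a : PowerSeries ℂ) * (b : PowerSeries ℂ)) = 1 := by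
        rw [hab', map_one]
      rw [map_mul, h0, zero_mul] at h1
      exact zero_ne_one h1
    · intro h0
      obtain ⟨g, hgfin, hfg⟩ := exists_inv hC ((hmemS _).mp a.2) h0
      refine isUnit_iff_exists_inv.mpr ⟨⟨g, (hmemS g).mpr hgfin⟩, ?_⟩
      exact Subtype.ext (by push_cast; exact hfg)
  haveI hnt : Nontrivial S := nontrivial_of_ne 0 1 fun h => by
    have h' := congrArg Subtype.val h
    simp only [ZeroMemClass.coe_zero, OneMemClass.coe_one] at h'
    exact zero_ne_one h'
  have hloc : IsLocalRing S := by
    refine IsLocalRing.of_isUnit_or_isUnit_one_sub_self fun a => ?_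
    by_cases h0 : PowerSeries.constantCoeff (R := ℂ) (a : PowerSeries ℂ) = 0
    · right
      refine (hunit _).mpr ?_
      have hco : ((1 - a : S) : PowerSeries ℂ) = 1 - (a : PowerSeries ℂ) := by push_cast; ring
      rw [hco, map_sub, map_one, h0, sub_zero]
      exact one_ne_zero
    · exact Or.inl ((hunit a).mpr h0)
  refine ⟨key, hloc, fun hl => ⟨?_, ?_⟩⟩
  · ext a
    simp only [SetLike.mem_coe, Set.mem_setOf_eq, IsLocalRing.mem_maximalIdeal,
      mem_nonunits_iff]
    rw [hunit a, not_not]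
  · set φ : S →+* ℂ := (PowerSeries.constantCoeff (R := ℂ)).comp S.subtype with hφ
    have hφa : ∀ a : S, φ a = PowerSeries.constantCoeff (R := ℂ) (a : PowerSeries ℂ) := fun a => rfl
    have hsurj : Function.Surjective φ := by
      intro z
      have hzmem : (PowerSeries.C (R := ℂ) z : PowerSeries ℂ) ∈ S := by
        rw [hmemS]
        have hz : normC C (PowerSeries.C (R := ℂ) z * 1) < ⊤ := by
          rw [normC_C_mul, normC_one, mul_one]
          exact ENNReal.coe_lt_top
        simpa using hz
      exact ⟨⟨_, hzmem⟩, by simp [hφa, PowerSeries.constantCoeff_C]⟩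
    have hker : IsLocalRing.maximalIdeal S = RingHom.ker φ := by
      ext a
      rw [IsLocalRing.mem_maximalIdeal, mem_nonunits_iff, hunit a, not_not, RingHom.mem_ker, hφa]
    refine ⟨(Ideal.quotEquivOfEq hker).trans (RingHom.quotientKerEquivOfSurjective hsurj),
      fun a => ?_⟩
    erw [RingEquiv.trans_apply]
end
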